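/- For all real x > 0, 2·(sinh x)/x + (tanh x)/x > 3. -/

import Mathlib

open Real

lemma huygens_aux (x : ℝ) (hx : 0 < x) :
    0 < 2 * Real.sinh x * Real.cosh x + Real.sinh x - 3 * x * Real.cosh x := by
  set g : ℝ → ℝ := fun t => 2 * Real.sinh t * Real.cosh t + Real.sinh t - 3 * t * Real.cosh t
    with hg
  have hderiv : ∀ t : ℝ, HasDerivAt g
      (2 * (Real.cosh t * Real.cosh t + Real.sinh t * Real.sinh t) + Real.cosh t
        - (3 * Real.cosh t + 3 * t * Real.sinh t)) t := by
    intro t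
    have h1 : HasDerivAt (fun t : ℝ => 2 * Real.sinh t * Real.cosh t)
        (2 * (Real.cosh t * Real.cosh t + Real.sinh t * Real.sinh t)) t := by
      have := ((Real.hasDerivAt_sinh t).const_mul (2:ℝ)).fun_mul (Real.hasDerivAt_cosh t)
      exact this.congr_deriv (by ring)
    have h2 := Real.hasDerivAt_sinh t
    have h3 : HasDerivAt (fun t : ℝ => 3 * t * Real.cosh t)
        (3 * Real.cosh t + 3 * t * Real.sinh t) t := by
      have := ((hasDerivAt_id' (𝕜 := ℝ) t).const_mul (3:ℝ)).fun_mul (Real.hasDerivAt_cosh t)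
      exact this.congr_deriv (by ring)
    exact (h1.add h2).sub h3
  have hmono : StrictMonoOn g (Set.Ici 0) := by
    apply strictMonoOn_of_deriv_pos (convex_Ici 0)
    · exact (Continuous.sub (by continuity) (by continuity)).continuousOn
    · intro t ht
      rw [interior_Ici] at ht
      rw [(hderiv t).deriv]
      have h1 : t < Real.sinh t := Real.self_lt_sinh_iff.mpr ht
      have h2 : 1 < Real.cosh t := Real.one_lt_cosh.mpr (ne_of_gt ht)
      have h3 : Real.cosh t ^ 2 - Real.sinh t ^ 2 = 1 := Real.cosh_sq_sub_sinh_sq t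
      have hs : 0 < Real.sinh t := Real.sinh_pos_iff.mpr ht
      nlinarith [sq_nonneg (Real.cosh t - 1), mul_pos (sub_pos.mpr h1) hs]
  have h0 : g 0 = 0 := by simp [hg]
  have := hmono (Set.self_mem_Ici) (Set.mem_Ici.mpr hx.le) hx
  rw [h0] at this
  exact this

theorem huygens_hyperbolic (x : ℝ) (hx : 0 < x) :
    2 * (Real.sinh x) / x + (Real.tanh x) / x > 3 := by
  have hc : 0 < Real.cosh x := Real.cosh_pos x
  have key := huygens_aux x hx
  have h4 : 3 * x - 2 * Real.sinh x < Real.sinh x / Real.cosh x := by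
    rw [lt_div_iff₀ hc]; nlinarith
  rw [Real.tanh_eq_sinh_div_cosh, gt_iff_lt, ← add_div, lt_div_iff₀ hx]
  linarith
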